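/- For any well order α there is a quasi-embedding from S^w_α, the finite sequences over α with the weak gap condition, into B^l_{α,1}, the binary trees with weakly ascending inner labels from α that ascend strictly on left subtrees and a single leaf label. The map sends a nonempty sequence to the tree whose root is the first occurrence of the minimal member, with left and right subtrees obtained recursively from the corresponding subsequences. -/

import Mathlib

/-- The weak gap condition on finite sequences over a linear order. -/
def WeakGap {α : Type*} [LinearOrder α] (s t : List α) : Prop :=
  ∃ f : Fin s.length → Fin t.length,
    StrictMono f ∧
    (∀ i, s.get i ≤ t.get (f i)) ∧
    ∀ (i : ℕ) (h : i + 1 < s.length) (j : Fin t.length),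
      f ⟨i, Nat.lt_of_succ_lt h⟩ < j → j < f ⟨i + 1, h⟩ → s.get ⟨i + 1, h⟩ ≤ t.get j

/-- The strong gap condition on finite sequences over a linear order:
as the weak one, but additionally respecting the outer gap. -/
def StrongGap {α : Type*} [LinearOrder α] (s t : List α) : Prop :=
  ∃ f : Fin s.length → Fin t.length,
    StrictMono f ∧
    (∀ i, s.get i ≤ t.get (f i)) ∧
    (∀ (i : ℕ) (h : i + 1 < s.length) (j : Fin t.length),
      f ⟨i, Nat.lt_of_succ_lt h⟩ < j → j < f ⟨i + 1, h⟩ → s.get ⟨i + 1, h⟩ ≤ t.get j) ∧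
    ∀ (h : 0 < s.length) (j : Fin t.length), j < f ⟨0, h⟩ → s.get ⟨0, h⟩ ≤ t.get j

/-- Binary trees with inner labels in `α` and a single leaf label. -/
inductive BTree (α : Type*) where
  | leaf : BTree α
  | node (b : α) (l r : BTree α) : BTree α

/-- The infimum-preserving embeddability relation on binary trees. -/
inductive BTree.Le {α : Type*} [LinearOrder α] : BTree α → BTree α → Prop
  | leaf : BTree.Le .leaf .leaf
  | left {s : BTree α} {γ : α} {tl tr : BTree α} :
      BTree.Le s tl → BTree.Le s (.node γ tl tr)
  | right {s : BTree α} {γ : α} {tl tr : BTree α} :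
      BTree.Le s tr → BTree.Le s (.node γ tl tr)
  | node {β γ : α} {sl sr tl tr : BTree α} :
      β ≤ γ → BTree.Le sl tl → BTree.Le sr tr →
        BTree.Le (.node β sl sr) (.node γ tl tr)

/-- The list of inner labels of a binary tree. -/
def BTree.innerLabels {α : Type*} : BTree α → List α
  | .leaf => []
  | .node b l r => b :: (l.innerLabels ++ r.innerLabels)

/-- Trees with weakly ascending inner labels which ascend strictly on left
subtrees (the trees of `B^l`). -/
def BTree.IsBl {α : Type*} [LinearOrder α] : BTree α → Prop
  | .leaf => True
  | .node b l r =>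
      (∀ x ∈ l.innerLabels, b < x) ∧ (∀ x ∈ r.innerLabels, b ≤ x) ∧
        l.IsBl ∧ r.IsBl

namespace QE
variable {α : Type*} [LinearOrder α]

/-- Strong gap condition, as an inductive relation. -/
inductive SG : List α → List α → Prop
  | nil (t : List α) : SG [] t
  | cons {a b : α} {s t : List α} : a ≤ b → SG s t → SG (a :: s) (b :: t)
  | skip {a b : α} {s t : List α} : a ≤ b → SG (a :: s) t → SG (a :: s) (b :: t)

theorem sg_extend {s v : List α} (h : SG s v) (u : List α) : SG s (v ++ u) := by
  induction h with
  | nil t => exact SG.nil _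
  | cons hab _ ih => exact SG.cons hab ih
  | skip hab _ ih => exact SG.skip hab ih

theorem sg_skip_many {a : α} {s t : List α} (u : List α) (hu : ∀ x ∈ u, a ≤ x)
    (h : SG (a :: s) t) : SG (a :: s) (u ++ t) := by
  induction u with
  | nil => exact h
  | cons x u ih =>
      exact SG.skip (hu x (by simp)) (ih fun y hy => hu y (by simp [hy]))

theorem sg_glue {s v : List α} (h : SG s v) {b d : α} {m s' v' : List α}
    (hv : ∀ x ∈ v, b ≤ x) (hm : ∀ x ∈ m, b ≤ x) (hd : b ≤ d) (h' : SG s' v') :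
    SG (s ++ b :: s') (v ++ (m ++ d :: v')) := by
  induction h with
  | nil t =>
      refine sg_skip_many t hv ?_
      exact sg_skip_many m hm (SG.cons hd h')
  | @cons a e sl tl hae _ ih =>
      exact SG.cons hae (ih fun x hx => hv x (by simp [hx]))
  | @skip a e sl tl hae _ ih =>
      exact SG.skip hae (ih fun x hx => hv x (by simp [hx]))

/-- Weak gap via strong gap on a suffix. -/
def WGi (s t : List α) : Prop := ∃ u v : List α, t = u ++ v ∧ SG s v

theorem wgi_nil (t : List α) : WGi [] t := ⟨[], t, rfl, SG.nil t⟩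

theorem wgi_extend {s t : List α} (h : WGi s t) (w : List α) : WGi s (t ++ w) := by
  obtain ⟨u, v, rfl, hsg⟩ := h
  exact ⟨u, v ++ w, by simp, sg_extend hsg w⟩

theorem wgi_prepend {s t : List α} (h : WGi s t) (w : List α) : WGi s (w ++ t) := by
  obtain ⟨u, v, rfl, hsg⟩ := h
  exact ⟨w ++ u, v, by simp, hsg⟩

theorem wgi_glue {sl tl sr tr : List α} {b c : α}
    (htl : ∀ x ∈ tl, b ≤ x) (hbc : b ≤ c) (htr : ∀ x ∈ tr, b ≤ x)
    (h1 : WGi sl tl) (h2 : WGi sr tr) : WGi (sl ++ b :: sr) (tl ++ c :: tr) := by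
  obtain ⟨u, v, rfl, hsg1⟩ := h1
  obtain ⟨u', v', rfl, hsg2⟩ := h2
  rcases List.eq_nil_or_concat (c :: u') with h | ⟨m, d, hmd⟩
  · simp at h
  refine ⟨u, v ++ (m ++ d :: v'), ?_, ?_⟩
  · have : (u ++ v) ++ c :: (u' ++ v') = u ++ (v ++ ((c :: u') ++ v')) := by simp
    rw [this, hmd]; simp [List.concat_eq_append]
  · refine sg_glue hsg1 (fun x hx => htl x (by simp [hx])) ?_ ?_ hsg2
    · intro x hx
      have : x ∈ c :: u' := by
        rw [hmd, List.concat_eq_append]; exact List.mem_append_left _ hx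
      rcases List.mem_cons.mp this with rfl | h
      · exact hbc
      · exact htr x (List.mem_append_left _ h)
    · have : d ∈ c :: u' := by rw [hmd, List.concat_eq_append]; simp
      rcases List.mem_cons.mp this with rfl | h
      · exact hbc
      · exact htr d (List.mem_append_left _ h)

theorem sg_strongGap {s t : List α} (h : SG s t) : StrongGap s t := by
  induction h with
  | nil t =>
      refine ⟨Fin.elim0, fun i => i.elim0, fun i => i.elim0, ?_, ?_⟩
      · intro i h; exact absurd h (by simp)
      · intro h; exact absurd h (by simp)
  | @cons a b s t hab hsg ih =>
      obtain ⟨f, hm, hv, hg, ho⟩ := ih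
      obtain ⟨F, hF0, hFs⟩ : ∃ F : Fin (a :: s).length → Fin (b :: t).length,
          (∀ h0 : (0:ℕ) < (a :: s).length, (F ⟨0, h0⟩).val = 0) ∧
          (∀ (k : ℕ) (hk : k < s.length),
            (F ⟨k + 1, by simp only [List.length_cons]; omega⟩).val = (f ⟨k, hk⟩).val + 1) := by
        refine ⟨fun i => if h : i.val = 0 then ⟨0, Nat.succ_pos _⟩
          else ⟨(f ⟨i.val - 1, by
              have := i.isLt; simp only [List.length_cons] at this; omega⟩).val + 1, by
            simp only [List.length_cons]; exact Nat.succ_lt_succ (Fin.is_lt _)⟩,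
          fun h0 => by simp, fun k hk => by simp⟩
      have hFlt : ∀ i : Fin (a :: s).length, (F i).val < t.length + 1 := fun i => by
        have := (F i).isLt; simpa using this
      refine ⟨F, ?_, ?_, ?_, ?_⟩
      · intro i j hij
        rcases i with ⟨iv, hi⟩; rcases j with ⟨jv, hj⟩
        have hi' : iv < s.length + 1 := by simpa using hi
        have hj' : jv < s.length + 1 := by simpa using hj
        have hij' : iv < jv := hij
        simp only [Fin.lt_def]
        obtain ⟨jk, rfl⟩ : ∃ k, jv = k + 1 := ⟨jv - 1, by omega⟩
        have hjk : jk < s.length := by omega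
        have e2 : (F ⟨jk + 1, hj⟩).val = (f ⟨jk, hjk⟩).val + 1 := hFs jk hjk
        rcases Nat.eq_zero_or_pos iv with rfl | hipos
        · have e1 : (F ⟨0, hi⟩).val = 0 := hF0 hi
          omega
        · obtain ⟨ik, rfl⟩ : ∃ k, iv = k + 1 := ⟨iv - 1, by omega⟩
          have hik : ik < s.length := by omega
          have e1 : (F ⟨ik + 1, hi⟩).val = (f ⟨ik, hik⟩).val + 1 := hFs ik hik
          have hmono : (f ⟨ik, hik⟩).val < (f ⟨jk, hjk⟩).val :=
            hm (show (⟨ik, hik⟩ : Fin s.length) < ⟨jk, hjk⟩ by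
              simp only [Fin.mk_lt_mk]; omega)
          omega
      · rintro ⟨iv, hi⟩
        have hi' : iv < s.length + 1 := by simpa using hi
        rcases Nat.eq_zero_or_pos iv with rfl | hipos
        · have e1 : (F ⟨0, hi⟩).val = 0 := hF0 hi
          have : ((b :: t).get (F ⟨0, hi⟩)) = b := by
            have : F ⟨0, hi⟩ = ⟨0, by simp⟩ := Fin.ext e1
            rw [this]; rfl
          rw [this]; exact hab
        · obtain ⟨k, rfl⟩ : ∃ k, iv = k + 1 := ⟨iv - 1, by omega⟩
          have hk : k < s.length := by omega
          have e1 : (F ⟨k + 1, hi⟩).val = (f ⟨k, hk⟩).val + 1 := hFs k hk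
          have : F ⟨k + 1, hi⟩ = ⟨(f ⟨k, hk⟩).val + 1, by
              simp only [List.length_cons]; exact Nat.succ_lt_succ (Fin.is_lt _)⟩ :=
            Fin.ext e1
          rw [this]
          have := hv ⟨k, hk⟩
          simpa using this
      · rintro i h ⟨jv, hj⟩ hj1 hj2
        have h' : i + 1 < s.length + 1 := by simpa using h
        have hj' : jv < t.length + 1 := by simpa using hj
        have hi0 : i < s.length := by omega
        have e2 : (F ⟨i + 1, h⟩).val = (f ⟨i, hi0⟩).val + 1 := hFs i hi0
        simp only [Fin.lt_def] at hj1 hj2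
        rcases Nat.eq_zero_or_pos i with rfl | hipos
        · have e1 : (F ⟨0, Nat.lt_of_succ_lt h⟩).val = 0 := hF0 _
          obtain ⟨jv', rfl⟩ : ∃ k, jv = k + 1 := ⟨jv - 1, by omega⟩
          have hlt : (⟨jv', by omega⟩ : Fin t.length) < f ⟨0, hi0⟩ := by
            simp only [Fin.lt_def]; omega
          have := ho (by omega) ⟨jv', by omega⟩ hlt
          simpa using this
        · obtain ⟨ii, rfl⟩ : ∃ k, i = k + 1 := ⟨i - 1, by omega⟩
          have hii : ii < s.length := by omega
          have e1 : (F ⟨ii + 1, Nat.lt_of_succ_lt h⟩).val = (f ⟨ii, hii⟩).val + 1 :=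
            hFs ii hii
          obtain ⟨jv', rfl⟩ : ∃ k, jv = k + 1 := ⟨jv - 1, by omega⟩
          have hs' : ii + 1 < s.length := by omega
          have hpe : (f ⟨ii, hii⟩).val = (f ⟨ii, Nat.lt_of_succ_lt hs'⟩).val := rfl
          have hpe2 : (f ⟨ii + 1, hi0⟩).val = (f ⟨ii + 1, hs'⟩).val := rfl
          have hlt1 : f ⟨ii, Nat.lt_of_succ_lt hs'⟩ < (⟨jv', by omega⟩ : Fin t.length) := by
            simp only [Fin.lt_def]; omega
          have hlt2 : (⟨jv', by omega⟩ : Fin t.length) < f ⟨ii + 1, hs'⟩ := by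
            simp only [Fin.lt_def]; omega
          have := hg ii hs' ⟨jv', by omega⟩ hlt1 hlt2
          simpa using this
      · rintro h ⟨jv, hj⟩ hjlt
        have e1 : (F ⟨0, h⟩).val = 0 := hF0 h
        simp only [Fin.lt_def] at hjlt
        omega
  | @skip a b s t hab hsg ih =>
      obtain ⟨f, hm, hv, hg, ho⟩ := ih
      refine ⟨fun i => ⟨(f i).val + 1, by
          simp only [List.length_cons]; exact Nat.succ_lt_succ (Fin.is_lt _)⟩, ?_, ?_, ?_, ?_⟩
      · intro i j hij
        exact Nat.succ_lt_succ (hm hij)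
      · intro i
        have := hv i
        rcases i with ⟨iv, hi⟩
        rcases Nat.eq_zero_or_pos iv with rfl | hipos
        · simpa using this
        · obtain ⟨iv', rfl⟩ : ∃ k, iv = k + 1 := ⟨iv - 1, by omega⟩
          simpa using this
      · rintro i h ⟨jv, hj⟩ hj1 hj2
        have hj' : jv < t.length + 1 := by simpa using hj
        simp only [Fin.mk_lt_mk] at hj1 hj2
        obtain ⟨jv', rfl⟩ : ∃ k, jv = k + 1 := ⟨jv - 1, by omega⟩
        have hlt1 : f ⟨i, Nat.lt_of_succ_lt h⟩ < (⟨jv', by omega⟩ : Fin t.length) := by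
          simp only [Fin.lt_def]; omega
        have hlt2 : (⟨jv', by omega⟩ : Fin t.length) < f ⟨i + 1, h⟩ := by
          simp only [Fin.lt_def]; omega
        have := hg i h ⟨jv', by omega⟩ hlt1 hlt2
        simpa using this
      · rintro h ⟨jv, hj⟩ hjlt
        have hj' : jv < t.length + 1 := by simpa using hj
        simp only [Fin.lt_def] at hjlt
        rcases Nat.eq_zero_or_pos jv with rfl | hjpos
        · simpa using hab
        · obtain ⟨jv', rfl⟩ : ∃ k, jv = k + 1 := ⟨jv - 1, by omega⟩
          have := ho h ⟨jv', by omega⟩ (by simp only [Fin.lt_def]; omega)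
          simpa using this

theorem strongGap_shift {s v : List α} (u : List α) (h : StrongGap s v) :
    WeakGap s (u ++ v) := by
  obtain ⟨f, hm, hv, hg, _⟩ := h
  have hlen : (u ++ v).length = u.length + v.length := by simp
  refine ⟨fun i => ⟨u.length + (f i).val, by rw [hlen]; exact Nat.add_lt_add_left (Fin.is_lt _) _⟩,
    ?_, ?_, ?_⟩
  · intro i j hij
    simp only [Fin.mk_lt_mk]
    exact Nat.add_lt_add_left (hm hij) _
  · intro i
    have := hv i
    have hget : (u ++ v).get ⟨u.length + (f i).val, by rw [hlen]; exact Nat.add_lt_add_left (Fin.is_lt _) _⟩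
        = v.get (f i) := by
      simp only [List.get_eq_getElem]
      rw [List.getElem_append_right (by omega)]
      congr 1
      omega
    rw [hget]
    exact this
  · rintro i h ⟨jv, hj⟩ hj1 hj2
    simp only [Fin.mk_lt_mk] at hj1 hj2
    have hj' : jv < u.length + v.length := by rw [hlen] at hj; exact hj
    have hjge : u.length ≤ jv := by omega
    have hjv' : jv - u.length < v.length := by omega
    have hget : (u ++ v).get ⟨jv, hj⟩ = v.get ⟨jv - u.length, hjv'⟩ := by
      simp only [List.get_eq_getElem]
      exact List.getElem_append_right hjge
    rw [hget]
    refine hg i h ⟨jv - u.length, hjv'⟩ ?_ ?_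
    · simp only [Fin.lt_def]; omega
    · simp only [Fin.lt_def]; omega

theorem wgi_weakGap {s t : List α} (h : ∃ u v : List α, t = u ++ v ∧ SG s v) :
    WeakGap s t := by
  obtain ⟨u, v, rfl, hsg⟩ := h
  exact strongGap_shift u (sg_strongGap hsg)

/-- minimum of `a :: l` -/
def lmin (a : α) (l : List α) : α := l.foldr min a

theorem lmin_le (a : α) (l : List α) : ∀ x ∈ a :: l, lmin a l ≤ x := by
  induction l with
  | nil => intro x hx; simp at hx; simp [lmin, hx]
  | cons c l ih =>
      intro x hx
      have hc : lmin a (c :: l) = min c (lmin a l) := rfl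
      rw [hc]
      rcases List.mem_cons.mp hx with rfl | hx'
      · exact le_trans (min_le_right _ _) (ih _ (by simp))
      rcases List.mem_cons.mp hx' with rfl | hx''
      · exact min_le_left _ _
      · exact le_trans (min_le_right _ _) (ih _ (List.mem_cons_of_mem _ hx''))

theorem lmin_mem (a : α) (l : List α) : lmin a l ∈ a :: l := by
  induction l with
  | nil => simp [lmin]
  | cons c l ih =>
      have hc : lmin a (c :: l) = min c (lmin a l) := rfl
      rcases le_total c (lmin a l) with h | h
      · rw [hc, min_eq_left h]; simp
      · rw [hc, min_eq_right h]
        rcases List.mem_cons.mp ih with h' | h'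
        · simp [h']
        · simp [h']

theorem drop_ne (a : α) (l : List α) :
    (a :: l).dropWhile (fun x => decide (lmin a l < x)) ≠ [] := by
  intro h
  have := List.dropWhile_eq_nil_iff.mp h _ (lmin_mem a l)
  simp at this

def seqTree : List α → BTree α
  | [] => .leaf
  | a :: l =>
      BTree.node (lmin a l)
        (seqTree ((a :: l).takeWhile fun x => lmin a l < x))
        (seqTree (((a :: l).dropWhile fun x => lmin a l < x).tail))
termination_by s => s.length
decreasing_by
  · have h1 := congrArg List.length
      (List.takeWhile_append_dropWhile : (a :: l).takeWhile (fun x => decide (lmin a l < x)) ++ (a :: l).dropWhile (fun x => decide (lmin a l < x)) = a :: l)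
    have h2 : ((a :: l).dropWhile (fun x => decide (lmin a l < x))).length ≠ 0 := by
      exact fun hh => drop_ne a l (List.length_eq_zero_iff.mp hh)
    simp only [List.length_append, List.length_cons] at h1 ⊢
    omega
  · have h1 := congrArg List.length
      (List.takeWhile_append_dropWhile : (a :: l).takeWhile (fun x => decide (lmin a l < x)) ++ (a :: l).dropWhile (fun x => decide (lmin a l < x)) = a :: l)
    have h2 : ((a :: l).dropWhile (fun x => decide (lmin a l < x))).length ≠ 0 := by
      exact fun hh => drop_ne a l (List.length_eq_zero_iff.mp hh)
    simp only [List.length_append, List.length_cons, List.length_tail] at h1 ⊢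
    omega

theorem seqTree_nil : seqTree ([] : List α) = BTree.leaf := by
  simp [seqTree]

theorem seqTree_cons (a : α) (l : List α) :
    seqTree (a :: l) = BTree.node (lmin a l)
      (seqTree ((a :: l).takeWhile fun x => lmin a l < x))
      (seqTree (((a :: l).dropWhile fun x => lmin a l < x).tail)) := by
  rw [seqTree]

theorem dropWhile_head_not (p : α → Bool) :
    ∀ (l : List α) (c : α) (sr : List α), l.dropWhile p = c :: sr → p c = false := by
  intro l
  induction l with
  | nil => intro c sr h; simp [List.dropWhile] at h
  | cons x xs ih =>
      intro c sr h
      rw [List.dropWhile_cons] at h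
      by_cases hx : p x = true
      · rw [if_pos hx] at h; exact ih _ _ h
      · rw [if_neg hx] at h
        obtain ⟨rfl, -⟩ := List.cons.injEq .. ▸ h
        simpa using hx

theorem takeWhile_split (b : α) (sr : List α) :
    ∀ (u : List α), (∀ x ∈ u, b < x) →
      (u ++ b :: sr).takeWhile (fun x => decide (b < x)) = u ∧
      (u ++ b :: sr).dropWhile (fun x => decide (b < x)) = b :: sr := by
  intro u
  induction u with
  | nil =>
      intro _
      constructor
      · rw [List.nil_append, List.takeWhile_cons, if_neg (by simp)]
      · rw [List.nil_append, List.dropWhile_cons, if_neg (by simp)]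
  | cons x u ih =>
      intro hu
      have hx : decide (b < x) = true := by simp; exact hu x (by simp)
      obtain ⟨ih1, ih2⟩ := ih fun y hy => hu y (by simp [hy])
      constructor
      · rw [List.cons_append, List.takeWhile_cons, if_pos hx, ih1]
      · rw [List.cons_append, List.dropWhile_cons, if_pos hx, ih2]

theorem seqTree_eq (sl : List α) (b : α) (sr : List α)
    (h1 : ∀ x ∈ sl, b < x) (h2 : ∀ x ∈ sr, b ≤ x) :
    seqTree (sl ++ b :: sr) = BTree.node b (seqTree sl) (seqTree sr) := by
  obtain ⟨a, l, hal⟩ : ∃ a l, sl ++ b :: sr = a :: l := by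
    cases sl <;> exact ⟨_, _, rfl⟩
  have hmem : b ∈ a :: l := by rw [← hal]; simp
  have hminb : lmin a l = b := by
    refine le_antisymm (lmin_le a l b hmem) ?_
    have hm := lmin_mem a l
    rw [← hal] at hm
    rcases List.mem_append.mp hm with h | h
    · exact le_of_lt (h1 _ h)
    · rcases List.mem_cons.mp h with h' | h'
      · exact le_of_eq h'.symm
      · exact h2 _ h'
  rw [hal, seqTree_cons, hminb, ← hal,
    (takeWhile_split b sr sl h1).1, (takeWhile_split b sr sl h1).2]
  rfl

theorem exists_decomp (a : α) (l : List α) :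
    ∃ sl b sr, a :: l = sl ++ b :: sr ∧ (∀ x ∈ sl, b < x) ∧ (∀ x ∈ sr, b ≤ x) := by
  set b := lmin a l with hb
  set p : α → Bool := fun x => decide (b < x) with hp
  obtain ⟨c, sr, hc⟩ : ∃ c sr, (a :: l).dropWhile p = c :: sr := by
    cases hdw : (a :: l).dropWhile p with
    | nil => exact absurd hdw (drop_ne a l)
    | cons c sr => exact ⟨c, sr, rfl⟩
  have hcmem : c ∈ a :: l := (List.dropWhile_sublist p).mem (hc ▸ (List.mem_cons_self : c ∈ c :: sr))
  have hcb : c = b := by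
    have hpc := dropWhile_head_not p _ _ _ hc
    have h1 : ¬ b < c := by simpa [hp] using hpc
    exact le_antisymm (not_lt.mp h1) (lmin_le a l c hcmem)
  refine ⟨(a :: l).takeWhile p, b, sr, ?_, ?_, ?_⟩
  · conv_lhs => rw [← (List.takeWhile_append_dropWhile : (a :: l).takeWhile p ++ (a :: l).dropWhile p = a :: l)]
    rw [hc, hcb]
  · intro x hx
    have := List.mem_takeWhile_imp hx
    simpa [hp] using this
  · intro x hx
    have hxmem : x ∈ a :: l := (List.dropWhile_sublist p).mem (hc ▸ List.mem_cons_of_mem c hx)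
    exact lmin_le a l x hxmem

theorem mem_inner_aux : ∀ (n : ℕ) (s : List α), s.length ≤ n →
    ∀ x, (x ∈ (seqTree s).innerLabels ↔ x ∈ s) := by
  intro n
  induction n with
  | zero =>
      intro s hs x
      have : s = [] := List.length_eq_zero_iff.mp (Nat.le_zero.mp hs)
      subst this
      rw [seqTree_nil]
      simp [BTree.innerLabels]
  | succ n ih =>
      intro s hs x
      cases s with
      | nil => rw [seqTree_nil]; simp [BTree.innerLabels]
      | cons a l =>
          obtain ⟨sl, b, sr, hdec, h1, h2⟩ := exists_decomp a l
          have hlen : sl.length + (sr.length + 1) = l.length + 1 := by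
            have := congrArg List.length hdec
            simpa using this.symm
          have hlen' : l.length + 1 ≤ n + 1 := by simpa using hs
          rw [hdec, seqTree_eq sl b sr h1 h2]
          simp only [BTree.innerLabels, List.mem_cons, List.mem_append,
            ih sl (by omega) x, ih sr (by omega) x]
          tauto

theorem mem_inner (s : List α) (x : α) : x ∈ (seqTree s).innerLabels ↔ x ∈ s :=
  mem_inner_aux s.length s le_rfl x

theorem isBl_aux : ∀ (n : ℕ) (s : List α), s.length ≤ n → (seqTree s).IsBl := by
  intro n
  induction n with
  | zero =>
      intro s hs
      have : s = [] := List.length_eq_zero_iff.mp (Nat.le_zero.mp hs)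
      subst this
      rw [seqTree_nil]
      trivial
  | succ n ih =>
      intro s hs
      cases s with
      | nil => rw [seqTree_nil]; trivial
      | cons a l =>
          obtain ⟨sl, b, sr, hdec, h1, h2⟩ := exists_decomp a l
          have hlen : sl.length + (sr.length + 1) = l.length + 1 := by
            have := congrArg List.length hdec
            simpa using this.symm
          have hlen' : l.length + 1 ≤ n + 1 := by simpa using hs
          rw [hdec, seqTree_eq sl b sr h1 h2]
          refine ⟨?_, ?_, ih sl (by omega), ih sr (by omega)⟩
          · intro x hx; exact h1 x ((mem_inner sl x).mp hx)
          · intro x hx; exact h2 x ((mem_inner sr x).mp hx)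

theorem seqTree_isBl (s : List α) : (seqTree s).IsBl := isBl_aux s.length s le_rfl

theorem main_lemma : ∀ (n : ℕ) (s t : List α), s.length + t.length ≤ n →
    BTree.Le (seqTree s) (seqTree t) → WGi s t := by
  intro n
  induction n with
  | zero =>
      intro s t hlen _
      have : s = [] := List.length_eq_zero_iff.mp (by omega)
      subst this
      exact wgi_nil t
  | succ n ih =>
      intro s t hlen hle
      cases s with
      | nil => exact wgi_nil t
      | cons a l =>
          obtain ⟨sl, b, sr, hs, h1, h2⟩ := exists_decomp a l
          have hfs : seqTree (a :: l) = BTree.node b (seqTree sl) (seqTree sr) := by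
            rw [hs]; exact seqTree_eq sl b sr h1 h2
          have hls : sl.length + (sr.length + 1) = l.length + 1 := by
            have := congrArg List.length hs
            simpa using this.symm
          cases t with
          | nil =>
              rw [hfs, seqTree_nil] at hle
              cases hle
          | cons c m =>
              obtain ⟨tl, c', tr, ht, g1, g2⟩ := exists_decomp c m
              have hft : seqTree (c :: m) = BTree.node c' (seqTree tl) (seqTree tr) := by
                rw [ht]; exact seqTree_eq tl c' tr g1 g2
              have hlt : tl.length + (tr.length + 1) = m.length + 1 := by
                have := congrArg List.length ht
                simpa using this.symm
              have hlen' : (l.length + 1) + (m.length + 1) ≤ n + 1 := by simpa using hlen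
              rw [hfs, hft] at hle
              cases hle with
              | left h =>
                  have hh : BTree.Le (seqTree (a :: l)) (seqTree tl) := by
                    rw [hfs]; exact h
                  have := ih (a :: l) tl (by simp only [List.length_cons]; omega) hh
                  rw [ht]
                  exact wgi_extend this (c' :: tr)
              | right h =>
                  have hh : BTree.Le (seqTree (a :: l)) (seqTree tr) := by
                    rw [hfs]; exact h
                  have := ih (a :: l) tr (by simp only [List.length_cons]; omega) hh
                  rw [ht]
                  have h3 := wgi_prepend this (tl ++ [c'])
                  have he : (tl ++ [c']) ++ tr = tl ++ c' :: tr := by simp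
                  rwa [he] at h3
              | node hbc hl hr =>
                  have w1 := ih sl tl (by omega) hl
                  have w2 := ih sr tr (by omega) hr
                  rw [hs, ht]
                  exact wgi_glue (fun x hx => le_trans hbc (le_of_lt (g1 x hx))) hbc
                    (fun x hx => le_trans hbc (g2 x hx)) w1 w2

end QE

/-- There is a quasi-embedding from sequences over `α` with the weak gap
condition into binary trees over `α` with weakly ascending inner labels that
ascend strictly on left subtrees: it sends a nonempty sequence to the tree
whose root is the first occurrence of the minimal member, and recursively
proceeds with the two corresponding subsequences. -/
theorem weakGap_quasiEmbeds_into_btreeL {α : Type*} [LinearOrder α]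
    [WellFoundedLT α] :
    ∃ f : List α → BTree α,
      f [] = BTree.leaf ∧
      (∀ (sl : List α) (b : α) (sr : List α),
        (∀ x ∈ sl, b < x) → (∀ x ∈ sr, b ≤ x) →
          f (sl ++ b :: sr) = BTree.node b (f sl) (f sr)) ∧
      (∀ s : List α, (f s).IsBl) ∧
      (∀ s t : List α, BTree.Le (f s) (f t) → WeakGap s t) := by
  refine ⟨QE.seqTree, QE.seqTree_nil, ?_, QE.seqTree_isBl, ?_⟩
  · intro sl b sr h1 h2
    exact QE.seqTree_eq sl b sr h1 h2
  · intro s t hle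
    exact QE.wgi_weakGap (QE.main_lemma (s.length + t.length) s t le_rfl hle)
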